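/- Let X be a zero-dimensional Hausdorff space with at least three points and let G ≤ Homeo(X) be such that G = F(G). Then G = S·S, where S is the union of the rigid stabilisers rist_G(Y) over all proper clopen subsets Y ⊊ X; that is, every element of G is a product of two homeomorphisms, each fixing pointwise the complement of some proper clopen subset of X. -/
import Mathlib


open scoped Pointwise

namespace Paper

/-- The rigid stabiliser of `Y ⊆ X` in `G`: the pointwise stabiliser of `X ∖ Y`. -/
def rist (G : Type*) {X : Type*} [Group G] [MulAction G X] (Y : Set X) : Subgroup G where
  carrier := {g | ∀ x : X, x ∉ Y → g • x = x}
  one_mem' := fun x _ => one_smul G x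
  mul_mem' := by
    intro a b ha hb x hx
    rw [mul_smul, hb x hx, ha x hx]
  inv_mem' := by
    intro a ha x hx
    nth_rewrite 1 [← ha x hx]
    exact inv_smul_smul a x

/-- `Y` is compressible by the subgroup `H`: every non-empty open set contains an
`H`-translate of `Y`. -/
def CompressibleBy {G X : Type*} [Group G] [MulAction G X] [TopologicalSpace X]
    (H : Subgroup G) (Y : Set X) : Prop :=
  ∀ O : Set X, IsOpen O → O.Nonempty → ∃ h ∈ H, h • Y ⊆ O

/-- `G` (acting on `X`) equals its own piecewise full group: every homeomorphism of `X`
that locally agrees with elements of `G` is (induced by) an element of `G`. -/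
def IsPiecewiseFull (G X : Type*) [Group G] [MulAction G X] [TopologicalSpace X] : Prop :=
  ∀ φ : X ≃ₜ X,
    (∀ x : X, ∃ U : Set X, IsOpen U ∧ x ∈ U ∧ ∃ g : G, ∀ y ∈ U, φ y = g • y) →
    ∃ g : G, ∀ x : X, φ x = g • x

/-- Lemma: let `X` be a zero-dimensional Hausdorff space with at least three points and
`G` a piecewise full group of homeomorphisms of `X`.  Then every element of `G` is a
product of two elements, each lying in the rigid stabiliser of some proper clopen
subset of `X`. -/
theorem piecewise_full_product_of_two {G X : Type*} [Group G]
    [TopologicalSpace X] [T2Space X]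
    [MulAction G X] [FaithfulSMul G X]
    (hbasis : TopologicalSpace.IsTopologicalBasis {U : Set X | IsClopen U})
    (hcont : ∀ g : G, Continuous fun x : X => g • x)
    (hthree : ∃ a b c : X, a ≠ b ∧ a ≠ c ∧ b ≠ c)
    (hpf : IsPiecewiseFull G X) :
    ∀ g : G, ∃ s₁ s₂ : G,
      (∃ Y : Set X, IsClopen Y ∧ Y ≠ Set.univ ∧ s₁ ∈ rist G Y) ∧
      (∃ Y : Set X, IsClopen Y ∧ Y ≠ Set.univ ∧ s₂ ∈ rist G Y) ∧
      g = s₁ * s₂ := by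
  classical
  intro g
  by_cases hg : ∀ x : X, g • x = x
  · -- trivial case: g fixes everything
    obtain ⟨a, b, c, hab, hac, hbc⟩ := hthree
    obtain ⟨U, hU, haU, hUb⟩ := hbasis.exists_subset_of_mem_open
      (show a ∈ ({b}ᶜ : Set X) from hab) isOpen_compl_singleton
    have hUne : U ≠ Set.univ := fun h => hUb (Set.eq_univ_iff_forall.mp h b) rfl
    exact ⟨g, 1, ⟨U, hU, hUne, fun x _ => hg x⟩,
      ⟨U, hU, hUne, fun x _ => one_smul G x⟩, (mul_one g).symm⟩
  · push_neg at hg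
    obtain ⟨x, hx⟩ := hg
    -- a third point z avoiding x and g • x
    obtain ⟨z, hzx, hzgx⟩ : ∃ z : X, z ≠ x ∧ z ≠ g • x := by
      obtain ⟨a, b, c, hab, hac, hbc⟩ := hthree
      by_cases hax : a = x
      · subst hax
        by_cases hbg : b = g • a
        · exact ⟨c, Ne.symm hac, fun h => hbc (h ▸ hbg)⟩
        · exact ⟨b, Ne.symm hab, hbg⟩
      · by_cases hag : a = g • x
        · by_cases hbx : b = x
          · exact ⟨c, fun h => hbc (h.trans hbx.symm).symm, fun h => hac (hag.trans h.symm)⟩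
          · exact ⟨b, hbx, fun h => hab (hag.trans h.symm)⟩
        · exact ⟨a, hax, hag⟩
    obtain ⟨A, B, hA, hB, hxA, hgxB, hAB⟩ := t2_separation (Ne.symm hx)
    -- a small clopen neighbourhood U of x
    have hOopen : IsOpen (A ∩ (fun y => g • y) ⁻¹' B ∩ ({z}ᶜ ∩ {g⁻¹ • z}ᶜ) : Set X) :=
      ((hA.inter (hB.preimage (hcont g))).inter
        (isOpen_compl_singleton.inter isOpen_compl_singleton))
    have hxO : x ∈ (A ∩ (fun y => g • y) ⁻¹' B ∩ ({z}ᶜ ∩ {g⁻¹ • z}ᶜ) : Set X) := by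
      refine ⟨⟨hxA, hgxB⟩, ?_, ?_⟩
      · exact fun h => hzx (by simpa using h.symm)
      · intro h
        apply hzgx
        have : g • x = g • (g⁻¹ • z) := by
          rw [show x = g⁻¹ • z from by simpa using h]
        rw [smul_inv_smul] at this
        exact this.symm
    obtain ⟨U, hU, hxU, hUO⟩ := hbasis.exists_subset_of_mem_open hxO hOopen
    have hU : IsClopen U := hU
    set V : Set X := (fun y => g⁻¹ • y) ⁻¹' U with hVdef
    have hV : IsClopen V := hU.preimage (hcont g⁻¹)
    -- disjointness of U and V
    have hdisj : ∀ y, y ∈ U → y ∈ V → False := by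
      intro y hyU hyV
      have h1 : y ∈ A := (hUO hyU).1.1
      have h2 : g • (g⁻¹ • y) ∈ B := (hUO hyV).1.2
      rw [smul_inv_smul] at h2
      exact Set.disjoint_left.mp hAB h1 h2
    have hzU : z ∉ U := fun h => (hUO h).2.1 rfl
    have hzV : z ∉ V := fun h => (hUO h).2.2 rfl
    have hmapUV : ∀ y, y ∈ U → g • y ∈ V := by
      intro y hy
      show g⁻¹ • (g • y) ∈ U
      rwa [inv_smul_smul]
    -- the piecewise homeomorphism
    let φ : X → X := fun y => if y ∈ U then g • y else if y ∈ V then g⁻¹ • y else y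
    have hφU : ∀ y, y ∈ U → φ y = g • y := fun y hy => if_pos hy
    have hφn : ∀ y, y ∉ U → φ y = if y ∈ V then g⁻¹ • y else y := fun y hy => if_neg hy
    have hφV : ∀ y, y ∉ U → y ∈ V → φ y = g⁻¹ • y := fun y hy hy' =>
      (hφn y hy).trans (if_pos hy')
    have hφo : ∀ y, y ∉ U → y ∉ V → φ y = y := fun y hy hy' =>
      (hφn y hy).trans (if_neg hy')
    have hinv : Function.Involutive φ := by
      intro y
      by_cases hyU : y ∈ U
      · rw [hφU y hyU, hφV (g • y) (fun h => hdisj _ h (hmapUV y hyU)) (hmapUV y hyU),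
          inv_smul_smul]
      · by_cases hyV : y ∈ V
        · rw [hφV y hyU hyV, hφU (g⁻¹ • y) hyV, smul_inv_smul]
        · rw [hφo y hyU hyV, hφo y hyU hyV]
    have hcφ : Continuous φ := by
      apply Continuous.if
      · intro a ha
        rw [show {x | x ∈ U} = U from rfl, hU.frontier_eq] at ha
        exact absurd ha (Set.notMem_empty a)
      · exact hcont g
      · apply Continuous.if
        · intro a ha
          rw [show {x | x ∈ V} = V from rfl, hV.frontier_eq] at ha
          exact absurd ha (Set.notMem_empty a)
        · exact hcont g⁻¹
        · exact continuous_id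
    let Φ : X ≃ₜ X :=
      { toEquiv := Function.Involutive.toPerm φ hinv
        continuous_toFun := hcφ
        continuous_invFun := hcφ }
    have hΦ : ∀ y, Φ y = φ y := fun _ => rfl
    obtain ⟨s₁, hs₁⟩ := hpf Φ (by
      intro y
      by_cases hyU : y ∈ U
      · exact ⟨U, hU.isOpen, hyU, g, fun w hw => (hΦ w).trans (hφU w hw)⟩
      · by_cases hyV : y ∈ V
        · refine ⟨V \ U, hV.isOpen.sdiff hU.isClosed, ⟨hyV, hyU⟩, g⁻¹,
            fun w hw => (hΦ w).trans (hφV w hw.2 hw.1)⟩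
        · refine ⟨(U ∪ V)ᶜ, (hU.union hV).isClosed.isOpen_compl, ?_, 1, ?_⟩
          · intro h
            rcases h with h | h
            · exact hyU h
            · exact hyV h
          · intro w hw
            rw [one_smul]
            exact (hΦ w).trans (hφo w (fun h => hw (Or.inl h)) (fun h => hw (Or.inr h))))
    refine ⟨s₁, s₁⁻¹ * g, ⟨U ∪ V, hU.union hV, ?_, ?_⟩, ⟨Uᶜ, hU.compl, ?_, ?_⟩, by group⟩
    · intro h
      have : z ∈ U ∪ V := Set.eq_univ_iff_forall.mp h z
      rcases this with h' | h'
      · exact hzU h'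
      · exact hzV h'
    · intro y hy
      have h1 : φ y = y := hφo y (fun h => hy (Or.inl h)) (fun h => hy (Or.inr h))
      rw [← hs₁ y]
      exact (hΦ y).trans h1
    · intro h
      exact (Set.eq_univ_iff_forall.mp h x) hxU
    · intro y hy
      have hyU : y ∈ U := not_not.mp hy
      rw [mul_smul, inv_smul_eq_iff]
      exact ((hφU y hyU).symm.trans (hΦ y).symm).trans (hs₁ y)

end Paper
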